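/- Let 𝔄 = {λ·1 + μ·E₁₂ : λ, μ ∈ ℂ} ⊆ M₂(ℂ), where E₁₂ is the standard matrix unit and 1 the identity matrix, and define S : 𝔄 → 𝔄 by S(λ·1 + μ·E₁₂) = λ·1 + 2μ·E₁₂. Then S is a local left multiplier: for every A ∈ 𝔄 there exists B ∈ 𝔄 with S(A) = B·A. -/

import Mathlib

/-- The standard matrix unit `E₁₂` in `M₂(ℂ)`. -/
def E₁₂ : Matrix (Fin 2) (Fin 2) ℂ := Matrix.single 0 1 1

lemma E₁₂_sq : E₁₂ * E₁₂ = 0 := by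
  unfold E₁₂
  rw [Matrix.single_mul_single_of_ne]
  decide

/-- On `𝔄 = {λ·1 + μ·E₁₂}`, the map `S(λ·1 + μ·E₁₂) = λ·1 + 2μ·E₁₂` is a local
left multiplier: for every `A ∈ 𝔄` there exists `B ∈ 𝔄` with `S A = B * A`. -/
theorem S_is_local_left_multiplier :
    ∀ lam mu : ℂ, ∃ lam' mu' : ℂ,
      lam • (1 : Matrix (Fin 2) (Fin 2) ℂ) + (2 * mu) • E₁₂ =
        (lam' • 1 + mu' • E₁₂) * (lam • 1 + mu • E₁₂) := by
  intro lam mu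
  rcases eq_or_ne lam 0 with h | h
  · refine ⟨2, 0, ?_⟩
    subst h
    simp [mul_smul, smul_comm (2:ℂ) mu]
  · refine ⟨1, mu / lam, ?_⟩
    rw [add_mul, mul_add, mul_add, smul_mul_smul_comm, smul_mul_smul_comm,
      smul_mul_smul_comm, smul_mul_smul_comm, E₁₂_sq]
    simp only [one_mul, mul_one, E₁₂.mul_one, Matrix.one_mul, smul_zero, add_zero,
      div_mul_cancel₀ _ h]
    rw [add_assoc, ← add_smul]
    ring_nf
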